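/- Let d ≥ 1 and let W : ℝ^{d×d} → ℝ be differentiable on GL₊(d) = {F ∈ ℝ^{d×d} : det F > 0} and frame indifferent, i.e. W(QF) = W(F) for every F ∈ GL₊(d) and every Q ∈ SO(d). Then for every F ∈ GL₊(d) the matrix F⁻¹ ∂_F W(F) (the second Piola–Kirchhoff stress tensor) is symmetric. -/

import Mathlib

open Matrix

attribute [local instance] Matrix.frobeniusNormedAddCommGroup Matrix.frobeniusNormedSpace

/-- Frobenius inner product `A : B = tr(Aᵀ B)`. -/
noncomputable def finner {d : ℕ} (A B : Matrix (Fin d) (Fin d) ℝ) : ℝ := (Aᵀ * B).trace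

/-- The continuous linear functional `Z ↦ G : Z`. -/
noncomputable def frobCLM {d : ℕ} (G : Matrix (Fin d) (Fin d) ℝ) :
    Matrix (Fin d) (Fin d) ℝ →L[ℝ] ℝ :=
  LinearMap.toContinuousLinearMap
    { toFun := fun Z => finner G Z
      map_add' := by intro a b; simp [finner, Matrix.mul_add]
      map_smul' := by intro c a; simp [finner, Matrix.mul_smul] }

section Aux

attribute [local instance] Matrix.frobeniusNormedAddCommGroup Matrix.frobeniusNormedSpace
  Matrix.frobeniusNormedRing Matrix.frobeniusNormedAlgebra

open NormedSpace

variable {d : ℕ}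

lemma aux_exp_orth (A : Matrix (Fin d) (Fin d) ℝ) (hA : Aᵀ = -A) (t : ℝ) :
    (exp (t • A))ᵀ * exp (t • A) = 1 := by
  rw [← Matrix.exp_transpose, Matrix.transpose_smul, hA, smul_neg, ← neg_smul,
    show exp (-t • A) * exp (t • A) = exp (-t • A + t • A) from
      (Matrix.exp_add_of_commute (-t • A) (t • A)
        (((Commute.refl A).smul_left (-t)).smul_right t)).symm,
    ← add_smul, neg_add_cancel, zero_smul, exp_zero]

lemma aux_exp_det (A : Matrix (Fin d) (Fin d) ℝ) (hA : Aᵀ = -A) (t : ℝ) :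
    (exp (t • A)).det = 1 := by
  have hsq : ∀ s : ℝ, ((exp (s • A)).det) ^ 2 = 1 := by
    intro s
    have h := congrArg Matrix.det (aux_exp_orth A hA s)
    rwa [Matrix.det_mul, Matrix.det_transpose, ← sq, Matrix.det_one] at h
  have hcont : Continuous fun s : ℝ => (exp (s • A)).det := by
    have h1 : Continuous fun s : ℝ => exp (s • A) :=
      (exp_continuous.comp (continuous_id.smul continuous_const))
    exact h1.matrix_det
  have hpos : ∀ s : ℝ, 0 < (exp (s • A)).det := by
    intro s
    by_contra h
    push_neg at h
    have hne : ∀ u : ℝ, (exp (u • A)).det ≠ 0 := by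
      intro u hu
      have := hsq u
      rw [hu] at this; norm_num at this
    have h0 : (exp ((0:ℝ) • A)).det = 1 := by
      simp [exp_zero]
    have hlt : (exp (s • A)).det < 0 := lt_of_le_of_ne h (hne s)
    rcases le_or_gt 0 s with hs | hs
    · have := intermediate_value_Icc' hs hcont.continuousOn
      have h0mem : (0:ℝ) ∈ Set.Icc ((fun s : ℝ => (exp (s • A)).det) s)
          ((fun s : ℝ => (exp (s • A)).det) 0) := by
        simp only [h0]
        exact ⟨hlt.le, zero_le_one⟩
      obtain ⟨u, _, hu⟩ := this h0mem
      exact hne u hu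
    · have := intermediate_value_Icc hs.le hcont.continuousOn
      have h0mem : (0:ℝ) ∈ Set.Icc ((fun s : ℝ => (exp (s • A)).det) s)
          ((fun s : ℝ => (exp (s • A)).det) 0) := by
        simp only [h0]
        exact ⟨hlt.le, zero_le_one⟩
      obtain ⟨u, _, hu⟩ := this h0mem
      exact hne u hu
  have := hsq t
  nlinarith [hpos t]

lemma aux_exp_deriv (A F : Matrix (Fin d) (Fin d) ℝ) :
    HasDerivAt (fun t : ℝ => exp (t • A) * F) (A * F) 0 := by
  have h := hasDerivAt_exp_smul_const' (𝕂 := ℝ) A (0 : ℝ)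
  simp only [zero_smul, exp_zero, mul_one] at h
  exact h.mul_const F

end Aux

open NormedSpace

/-- If `W` is differentiable on `GL₊(d)` with (Frobenius) gradient `DW`, and `W` is frame
indifferent (`W(QF) = W(F)` for all `Q ∈ SO(d)` and `F ∈ GL₊(d)`), then the second
Piola–Kirchhoff stress tensor `F⁻¹ ∂_F W(F)` is symmetric for every `F ∈ GL₊(d)`. -/

theorem statement0 {d : ℕ} (hd : 1 ≤ d)
    (W : Matrix (Fin d) (Fin d) ℝ → ℝ)
    (DW : Matrix (Fin d) (Fin d) ℝ → Matrix (Fin d) (Fin d) ℝ)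
    (hdiff : ∀ F : Matrix (Fin d) (Fin d) ℝ, 0 < F.det → HasFDerivAt W (frobCLM (DW F)) F)
    (hframe : ∀ F : Matrix (Fin d) (Fin d) ℝ, 0 < F.det →
      ∀ Q : Matrix (Fin d) (Fin d) ℝ, Qᵀ * Q = 1 → Q.det = 1 → W (Q * F) = W F) :
    ∀ F : Matrix (Fin d) (Fin d) ℝ, 0 < F.det → (F⁻¹ * DW F)ᵀ = F⁻¹ * DW F := by
  intro F hF
  set G := DW F with hG
  -- Step 1: for every skew A, tr(Gᵀ (A F)) = 0
  have key : ∀ A : Matrix (Fin d) (Fin d) ℝ, Aᵀ = -A → (Gᵀ * (A * F)).trace = 0 := by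
    intro A hA
    have hφ : HasDerivAt (fun t : ℝ => exp (t • A) * F) (A * F) 0 := aux_exp_deriv A F
    have hφ0 : exp ((0:ℝ) • A) * F = F := by simp [exp_zero]
    have hW : HasFDerivAt W (frobCLM G) (exp ((0:ℝ) • A) * F) := by
      rw [hφ0]; exact hdiff F hF
    have hcomp : HasDerivAt (fun t : ℝ => W (exp (t • A) * F)) (frobCLM G (A * F)) 0 :=
      hW.comp_hasDerivAt 0 hφ
    have hconst : (fun t : ℝ => W (exp (t • A) * F)) = fun _ => W F := by
      funext t
      exact hframe F hF _ (aux_exp_orth A hA t) (aux_exp_det A hA t)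
    rw [hconst] at hcomp
    have := (hasDerivAt_const (0:ℝ) (W F)).unique hcomp
    simpa [frobCLM, finner, LinearMap.toContinuousLinearMap] using this.symm
  -- Step 2: M := F Gᵀ is symmetric
  have hM : F * Gᵀ = (F * Gᵀ)ᵀ := by
    set M := F * Gᵀ with hMdef
    have htr : ∀ A : Matrix (Fin d) (Fin d) ℝ, Aᵀ = -A → (M * A).trace = 0 := by
      intro A hA
      have := key A hA
      rwa [show Gᵀ * (A * F) = (Gᵀ * A) * F by rw [mul_assoc], Matrix.trace_mul_comm,
        show F * (Gᵀ * A) = (F * Gᵀ) * A by rw [mul_assoc]] at this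
    set S := M - Mᵀ with hSdef
    have hSskew : Sᵀ = -S := by
      simp [hSdef, Matrix.transpose_sub]
    have hMS : (M * S).trace = 0 := htr S hSskew
    have hMtS : (Mᵀ * S).trace = 0 := by
      have : (Mᵀ * S).trace = (M * Sᵀ).trace := by
        rw [← Matrix.trace_transpose (Mᵀ * S), Matrix.transpose_mul, Matrix.transpose_transpose,
          Matrix.trace_mul_comm]
      rw [this, hSskew, Matrix.mul_neg, Matrix.trace_neg, hMS, neg_zero]
    have hSS : (Sᵀ * S).trace = 0 := by
      rw [hSskew, Matrix.neg_mul, Matrix.trace_neg, hSdef, Matrix.sub_mul, Matrix.trace_sub,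
        ← hSdef, hMS, hMtS, sub_zero, neg_zero]
    have hS0 : S = 0 := by
      have hsum : ∑ j, ∑ i, (S i j) ^ 2 = 0 := by
        have : (Sᵀ * S).trace = ∑ j, ∑ i, (S i j) ^ 2 := by
          simp [Matrix.trace, Matrix.diag, Matrix.mul_apply, sq]
        rw [← this, hSS]
      ext i j
      have h1 : ∀ j ∈ Finset.univ, (0:ℝ) ≤ ∑ i, (S i j) ^ 2 := fun j _ =>
        Finset.sum_nonneg fun i _ => sq_nonneg _
      have h2 := (Finset.sum_eq_zero_iff_of_nonneg h1).mp hsum j (Finset.mem_univ j)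
      have h3 := (Finset.sum_eq_zero_iff_of_nonneg
        (fun i _ => sq_nonneg (S i j))).mp h2 i (Finset.mem_univ i)
      simpa using pow_eq_zero_iff (n := 2) (by norm_num) |>.mp h3
    have : M - Mᵀ = 0 := hS0
    rw [sub_eq_zero] at this
    exact this
  -- Step 3: conclude
  have hdet : IsUnit F.det := isUnit_iff_ne_zero.mpr hF.ne'
  have hdetT : IsUnit Fᵀ.det := by rwa [Matrix.det_transpose]
  have hsym : F * Gᵀ = G * Fᵀ := by
    rw [hM, Matrix.transpose_mul, Matrix.transpose_transpose]
  have hGt : Gᵀ = F⁻¹ * (G * Fᵀ) := by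
    rw [← hsym, ← mul_assoc, Matrix.nonsing_inv_mul F hdet, one_mul]
  rw [Matrix.transpose_mul, Matrix.transpose_nonsing_inv, hGt, mul_assoc, mul_assoc,
    Matrix.mul_nonsing_inv Fᵀ hdetT, mul_one]
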